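/- Let s be a rational number and let r > 0 be a real number with r^2 rational. Then I_s(r) ≠ 0 and r · I_{s+1}(r) / I_s(r) is irrational. -/

import Mathlib

open Real Filter

namespace BesselAux

/-- The "reduced" Bessel series: `G t ν = ∑ t^k / (k! Γ(ν+k+1))`. -/
noncomputable def G (t ν : ℝ) : ℝ :=
  ∑' k : ℕ, t ^ k / (k.factorial * Real.Gamma (ν + k + 1))



lemma one_div_Gamma_eq (y : ℝ) : 1 / Real.Gamma y = y / Real.Gamma (y + 1) := by
  rcases eq_or_ne y 0 with rfl | hy
  · simp [Real.Gamma_zero]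
  rcases Classical.em (∃ m : ℕ, y = -m) with ⟨m, rfl⟩ | h
  · have hm : Real.Gamma (-(m:ℝ)) = 0 := Real.Gamma_neg_nat_eq_zero m
    have hm1 : Real.Gamma (-(m:ℝ) + 1) = 0 := by
      have : (m:ℝ) ≠ 0 := by
        intro h0; apply hy; rw [h0]; simp
      obtain ⟨m', rfl⟩ : ∃ m' : ℕ, m = m' + 1 := by
        cases m with
        | zero => simp at this
        | succ m' => exact ⟨m', rfl⟩
      have : (-(↑(m' + 1)) + 1 : ℝ) = -(m' : ℝ) := by push_cast; ring
      rw [this]; exact Real.Gamma_neg_nat_eq_zero m'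
    rw [hm, hm1]; simp
  · push_neg at h
    have h1 : Real.Gamma y ≠ 0 := Real.Gamma_ne_zero h
    rw [Real.Gamma_add_one hy]
    field_simp

/-- `Γ(x + k + 1) ≥ k! Γ(x+1)` for `x ≥ 0`. -/
lemma gamma_lb (x : ℝ) (hx : 0 ≤ x) : ∀ k : ℕ,
    (k.factorial : ℝ) * Real.Gamma (x + 1) ≤ Real.Gamma (x + k + 1) := by
  intro k
  induction k with
  | zero => simp
  | succ k ih =>
    have hpos : 0 < x + k + 1 := by positivity
    have h1 : Real.Gamma (x + ((k:ℝ)+1) + 1) = (x + k + 1) * Real.Gamma (x + k + 1) := by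
      have h2 : (x + ((k:ℝ)+1) + 1 : ℝ) = (x + k + 1) + 1 := by ring
      rw [h2, Real.Gamma_add_one hpos.ne']
    push_cast
    rw [h1]
    have hk1 : ((k:ℝ) + 1) ≤ x + k + 1 := by linarith
    calc ((k+1).factorial : ℝ) * Real.Gamma (x + 1)
        = ((k:ℝ) + 1) * ((k.factorial : ℝ) * Real.Gamma (x + 1)) := by
          rw [Nat.factorial_succ]; push_cast; ring
      _ ≤ ((k:ℝ) + 1) * Real.Gamma (x + k + 1) := by
          apply mul_le_mul_of_nonneg_left ih (by positivity)
      _ ≤ (x + k + 1) * Real.Gamma (x + k + 1) := by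
          apply mul_le_mul_of_nonneg_right hk1 (Real.Gamma_pos_of_pos hpos).le

lemma gamma_pos_shift (ν : ℝ) (K : ℕ) (hK : 0 ≤ ν + K) (k : ℕ) :
    0 < Real.Gamma (ν + (K + k) + 1) := by
  apply Real.Gamma_pos_of_pos
  have : (0:ℝ) ≤ k := Nat.cast_nonneg k
  push_cast
  linarith

lemma summable_G (t ν : ℝ) : Summable (fun k : ℕ => t ^ k / (k.factorial * Real.Gamma (ν + k + 1))) := by
  obtain ⟨K, hK⟩ : ∃ K : ℕ, 0 ≤ ν + K := by
    obtain ⟨K, hK⟩ := exists_nat_ge (-ν)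
    exact ⟨K, by linarith⟩
  rw [← summable_nat_add_iff K]
  have hC : 0 < Real.Gamma (ν + K + 1) := by
    apply Real.Gamma_pos_of_pos; linarith
  apply Summable.of_norm
  have hs : Summable (fun k : ℕ => |t| ^ K * (1 / Real.Gamma (ν + K + 1)) * (|t| ^ k / k.factorial)) :=
    (Real.summable_pow_div_factorial |t|).mul_left _
  apply hs.of_nonneg_of_le (fun k => norm_nonneg _)
  intro k
  have hg : (k.factorial : ℝ) * Real.Gamma (ν + K + 1) ≤ Real.Gamma (ν + (k + K) + 1) := by
    have := gamma_lb (ν + K) (by linarith) k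
    have h2 : (ν + K + k + 1 : ℝ) = ν + (k + K) + 1 := by push_cast; ring
    rw [h2] at this
    linarith [this]
  have hgpos : 0 < Real.Gamma (ν + (k + K) + 1) := by
    have := gamma_pos_shift ν K hK k
    have h2 : (ν + (K + k) + 1 : ℝ) = ν + (k + K) + 1 := by push_cast; ring
    rwa [h2] at this
  have hfac : (0:ℝ) < (k + K).factorial := by positivity
  rw [Real.norm_eq_abs, abs_div, abs_mul, abs_pow]
  push_cast
  rw [Nat.abs_cast, abs_of_pos hgpos]
  rw [div_le_iff₀ (by positivity)]
  have h1 : |t| ^ (k + K) = |t| ^ K * |t| ^ k := by rw [pow_add]; ring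
  rw [h1]
  have hfacle : (k.factorial : ℝ) ≤ ((k + K).factorial : ℝ) := by
    exact_mod_cast Nat.factorial_le (Nat.le_add_right k K)
  have key : (k.factorial:ℝ) * Real.Gamma (ν + K + 1) ≤ ((k+K).factorial : ℝ) * Real.Gamma (ν + (k+K) + 1) := by
    calc (k.factorial:ℝ) * Real.Gamma (ν + K + 1) ≤ Real.Gamma (ν + (k + K) + 1) := hg
      _ ≤ ((k+K).factorial : ℝ) * Real.Gamma (ν + (k+K) + 1) := by
          have h1le : (1:ℝ) ≤ ((k+K).factorial : ℝ) := by
            exact_mod_cast Nat.one_le_iff_ne_zero.mpr (Nat.factorial_ne_zero (k+K))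
          nlinarith [hgpos]
  calc |t| ^ K * |t| ^ k
      = (|t| ^ K * (1 / Real.Gamma (ν + K + 1)) * (|t| ^ k / ↑k.factorial)) * ((k.factorial:ℝ) * Real.Gamma (ν + K + 1)) := by
        field_simp
    _ ≤ (|t| ^ K * (1 / Real.Gamma (ν + K + 1)) * (|t| ^ k / ↑k.factorial)) * (((k+K).factorial : ℝ) * Real.Gamma (ν + (k+K) + 1)) := by
        apply mul_le_mul_of_nonneg_left key (by positivity)
    _ = _ := by ring



lemma G_term_nonneg (t ν : ℝ) (ht : 0 ≤ t) (hν : 0 ≤ ν) (k : ℕ) :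
    0 ≤ t ^ k / (k.factorial * Real.Gamma (ν + k + 1)) := by
  have : 0 < Real.Gamma (ν + k + 1) := Real.Gamma_pos_of_pos (by positivity)
  positivity

lemma G_lb (t ν : ℝ) (ht : 0 ≤ t) (hν : 0 ≤ ν) : 1 / Real.Gamma (ν + 1) ≤ G t ν := by
  have h0 : t ^ (0:ℕ) / ((0:ℕ).factorial * Real.Gamma (ν + (0:ℕ) + 1)) = 1 / Real.Gamma (ν + 1) := by
    norm_num
  rw [← h0]
  exact Summable.le_tsum (summable_G t ν) 0 (fun j _ => G_term_nonneg t ν ht hν j)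

lemma G_pos (t ν : ℝ) (ht : 0 ≤ t) (hν : 0 ≤ ν) : 0 < G t ν := by
  have h1 : 0 < Real.Gamma (ν + 1) := Real.Gamma_pos_of_pos (by positivity)
  calc (0:ℝ) < 1 / Real.Gamma (ν + 1) := by positivity
    _ ≤ G t ν := G_lb t ν ht hν

lemma G_ub (t ν : ℝ) (ht : 0 ≤ t) (hν : 0 ≤ ν) :
    G t ν ≤ (∑' k : ℕ, t ^ k / k.factorial) / Real.Gamma (ν + 1) := by
  have hΓ : 0 < Real.Gamma (ν + 1) := Real.Gamma_pos_of_pos (by positivity)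
  have key : ∀ k : ℕ, t ^ k / (k.factorial * Real.Gamma (ν + k + 1)) ≤
      t ^ k / k.factorial / Real.Gamma (ν + 1) := by
    intro k
    have h1 : (k.factorial : ℝ) * Real.Gamma (ν + 1) ≤ Real.Gamma (ν + k + 1) := gamma_lb ν hν k
    have h2 : (1:ℝ) ≤ k.factorial := by exact_mod_cast Nat.one_le_iff_ne_zero.mpr (Nat.factorial_ne_zero k)
    have hg : 0 < Real.Gamma (ν + k + 1) := Real.Gamma_pos_of_pos (by positivity)
    rw [div_le_div_iff₀ (by positivity) (by positivity)]
    have htk : 0 ≤ t ^ k := by positivity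
    have hfk : (0:ℝ) < k.factorial := by positivity
    have hr : t ^ k / (k.factorial:ℝ) * ((k.factorial:ℝ) * Real.Gamma (ν + k + 1)) = t ^ k * Real.Gamma (ν + k + 1) := by
      field_simp
    rw [hr]
    have hgg : Real.Gamma (ν+1) ≤ Real.Gamma (ν+k+1) := by nlinarith
    nlinarith
  have hsum : Summable (fun k : ℕ => t ^ k / k.factorial / Real.Gamma (ν + 1)) :=
    (Real.summable_pow_div_factorial t).div_const _
  have := Summable.tsum_le_tsum key (summable_G t ν) hsum
  rwa [tsum_div_const] at this

lemma G_rec (t ν : ℝ) : G t ν = (ν + 1) * G t (ν + 1) + t * G t (ν + 2) := by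
  have hA : Summable (fun k : ℕ => (ν+1) * (t ^ k / (k.factorial * Real.Gamma (ν + 1 + k + 1)))) :=
    (summable_G t (ν+1)).mul_left _
  have hshift : ∀ k : ℕ, ((k:ℝ)+1) * t ^ (k+1) / (((k+1).factorial : ℝ) * Real.Gamma (ν + ((k:ℝ)+1) + 2)) =
      t * (t ^ k / (k.factorial * Real.Gamma (ν + 2 + k + 1))) := by
    intro k
    have hfac : ((k+1).factorial : ℝ) = ((k:ℝ)+1) * k.factorial := by
      rw [Nat.factorial_succ]; push_cast; ring
    have hΓ : (ν + ((k:ℝ)+1) + 2) = (ν + 2 + k + 1) := by ring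
    rw [hfac, hΓ, pow_succ]
    have hk1 : ((k:ℝ)+1) ≠ 0 := by positivity
    have hkf : ((k.factorial:ℝ)) ≠ 0 := by positivity
    rcases eq_or_ne (Real.Gamma (ν + 2 + k + 1)) 0 with hg | hg
    · rw [hg]; simp
    · field_simp
  have hB : Summable (fun k : ℕ => (k:ℝ) * t ^ k / (k.factorial * Real.Gamma (ν + k + 2))) := by
    rw [← summable_nat_add_iff 1]
    apply ((summable_G t (ν+2)).mul_left t).congr
    intro k
    have := (hshift k).symm
    push_cast
    convert this using 3 <;> push_cast <;> ring
  have hpt : ∀ k : ℕ, t ^ k / (k.factorial * Real.Gamma (ν + k + 1)) =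
      (ν+1) * (t ^ k / (k.factorial * Real.Gamma (ν + 1 + k + 1))) +
      (k:ℝ) * t ^ k / (k.factorial * Real.Gamma (ν + k + 2)) := by
    intro k
    have h1 : 1 / Real.Gamma (ν + k + 1) = (ν + k + 1) / Real.Gamma (ν + k + 2) := by
      have := one_div_Gamma_eq (ν + k + 1)
      rwa [show (ν + ↑k + 1 + 1 : ℝ) = ν + k + 2 by ring] at this
    have h2 : (ν + 1 + (k:ℝ) + 1 : ℝ) = ν + k + 2 := by ring
    rw [h2]
    have expand : t ^ k / ((k.factorial:ℝ) * Real.Gamma (ν + k + 1)) =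
        t ^ k / (k.factorial:ℝ) * (1 / Real.Gamma (ν + k + 1)) := by ring
    rw [expand, h1]
    ring
  have hsum : G t ν = ∑' k : ℕ, ((ν+1) * (t ^ k / (k.factorial * Real.Gamma (ν + 1 + k + 1))) +
      (k:ℝ) * t ^ k / (k.factorial * Real.Gamma (ν + k + 2))) := by
    exact tsum_congr hpt
  rw [hsum, Summable.tsum_add hA hB, tsum_mul_left]
  congr 1
  rw [Summable.tsum_eq_zero_add hB]
  simp only [Nat.cast_zero, zero_mul, zero_div, zero_add]
  have : G t (ν + 2) = ∑' k : ℕ, (t ^ k / (k.factorial * Real.Gamma (ν + 2 + k + 1))) := rfl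
  rw [this, ← tsum_mul_left]
  apply tsum_congr
  intro k
  have := hshift k
  push_cast
  convert this using 3 <;> push_cast <;> ring



/-- The rational shadow sequence. -/
def wseq (s t w0 w1 : ℚ) : ℕ → ℚ
  | 0 => w0
  | 1 => w1
  | (n+2) => (wseq s t w0 w1 n - (s + n + 1) * wseq s t w0 w1 (n+1)) / t

lemma wseq_tracks (s t : ℚ) (ht : (0:ℚ) < t) (w0 w1 : ℚ) (g : ℕ → ℝ) (h : ℝ)
    (hrec : ∀ n : ℕ, g (n+2) = (g n - ((s:ℝ) + n + 1) * g (n+1)) / (t:ℝ))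
    (h0 : g 0 = (w0:ℝ) * h) (h1 : g 1 = (w1:ℝ) * h) :
    ∀ n, g n = ((wseq s t w0 w1 n : ℚ) : ℝ) * h := by
  have key : ∀ n, g n = ((wseq s t w0 w1 n : ℚ) : ℝ) * h ∧
      g (n+1) = ((wseq s t w0 w1 (n+1) : ℚ) : ℝ) * h := by
    intro n
    induction n with
    | zero => exact ⟨h0, h1⟩
    | succ n ih =>
      refine ⟨ih.2, ?_⟩
      rw [hrec n, ih.1, ih.2]
      show _ = ((((wseq s t w0 w1 n - (s + n + 1) * wseq s t w0 w1 (n+1)) / t : ℚ)):ℝ) * h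
      push_cast
      field_simp
  exact fun n => (key n).1

lemma wseq_den (s t w0 w1 : ℚ) (ht : 0 < t) :
    ∀ n : ℕ, ∃ z : ℤ, ((w0.den * w1.den : ℕ) : ℚ) * ((t.num * s.den : ℤ) : ℚ) ^ n
      * wseq s t w0 w1 n = (z : ℚ) := by
  set D : ℕ := w0.den * w1.den with hD
  set M : ℤ := t.num * s.den with hM
  have htnum : 0 < t.num := Rat.num_pos.mpr ht
  have hMpos : 0 < M := by positivity
  have base0 : ∃ z : ℤ, ((D:ℚ)) * ((M:ℚ)) ^ 0 * wseq s t w0 w1 0 = (z:ℚ) := by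
    refine ⟨w0.num * w1.den, ?_⟩
    show ((D:ℚ)) * ((M:ℚ)) ^ 0 * w0 = _
    rw [pow_zero]
    push_cast [hD]
    rw [mul_one]
    rw [mul_comm (w0.den : ℚ) (w1.den : ℚ), mul_assoc, Rat.den_mul_eq_num]  -- guess
    push_cast
    ring
  have base1 : ∃ z : ℤ, ((D:ℚ)) * ((M:ℚ)) ^ 1 * wseq s t w0 w1 1 = (z:ℚ) := by
    refine ⟨M * (w0.den * w1.num), ?_⟩
    show ((D:ℚ)) * ((M:ℚ)) ^ 1 * w1 = _
    push_cast [hD]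
    rw [pow_one]
    rw [show ((w0.den:ℚ) * (w1.den:ℚ) * (M:ℚ) * w1 : ℚ) =
      (M:ℚ) * ((w0.den:ℚ) * ((w1.den:ℚ) * w1)) from by ring, Rat.den_mul_eq_num]
  have step : ∀ n : ℕ,
      (∃ z : ℤ, ((D:ℚ)) * ((M:ℚ)) ^ n * wseq s t w0 w1 n = (z:ℚ)) →
      (∃ z : ℤ, ((D:ℚ)) * ((M:ℚ)) ^ (n+1) * wseq s t w0 w1 (n+1) = (z:ℚ)) →
      (∃ z : ℤ, ((D:ℚ)) * ((M:ℚ)) ^ (n+2) * wseq s t w0 w1 (n+2) = (z:ℚ)) := by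
    rintro n ⟨z0, hz0⟩ ⟨z1, hz1⟩
    refine ⟨t.den * (t.num * s.den^2 * z0 - (s.num + (n+1) * s.den) * z1), ?_⟩
    have hw2 : wseq s t w0 w1 (n+2) =
        (wseq s t w0 w1 n - (s + n + 1) * wseq s t w0 w1 (n+1)) / t := rfl
    rw [hw2]
    have expand : ((D:ℚ)) * ((M:ℚ)) ^ (n+2) *
        ((wseq s t w0 w1 n - (s + n + 1) * wseq s t w0 w1 (n+1)) / t) =
        ((M:ℚ))^2/t * (((D:ℚ)) * ((M:ℚ))^n * wseq s t w0 w1 n)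
        - ((M:ℚ))/t * (s + n + 1) * (((D:ℚ)) * ((M:ℚ))^(n+1) * wseq s t w0 w1 (n+1)) := by
      ring
    rw [expand, hz0, hz1]
    have hMcast : ((M:ℚ)) = (t.num : ℚ) * (s.den : ℚ) := by push_cast [hM]; ring
    have htnum' : (t.num : ℚ) = (t.den : ℚ) * t := (Rat.den_mul_eq_num t).symm
    have hsnum' : (s.num : ℚ) = (s.den : ℚ) * s := (Rat.den_mul_eq_num s).symm
    have e1 : ((M:ℚ))^2 / t = (t.num : ℚ) * t.den * (s.den:ℚ)^2 := by
      rw [hMcast, div_eq_iff ht.ne', htnum']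
      ring
    have e2 : ((M:ℚ))/t * (s + (n:ℚ) + 1) = (t.den:ℚ) * ((s.num:ℚ) + ((n:ℚ)+1) * (s.den:ℚ)) := by
      rw [hMcast, div_mul_eq_mul_div, div_eq_iff ht.ne', htnum', hsnum']
      ring
    rw [e1, e2]
    push_cast
    ring
  intro n
  have key : ∀ m : ℕ,
      (∃ z : ℤ, ((D:ℚ)) * ((M:ℚ)) ^ m * wseq s t w0 w1 m = (z:ℚ)) ∧
      (∃ z : ℤ, ((D:ℚ)) * ((M:ℚ)) ^ (m+1) * wseq s t w0 w1 (m+1) = (z:ℚ)) := by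
    intro m
    induction m with
    | zero => exact ⟨base0, base1⟩
    | succ m ih => exact ⟨ih.2, step m ih.1 ih.2⟩
  exact (key n).1

lemma zero_case (s t : ℚ) (ht : 0 < t) (g : ℕ → ℝ)
    (hgdef : ∀ n : ℕ, g n = G (t:ℝ) ((s:ℝ) + n))
    (hrec : ∀ n : ℕ, g (n+2) = (g n - ((s:ℝ) + n + 1) * g (n+1)) / (t:ℝ))
    (h0 : g 0 = 0) (h1 : g 1 = 0) : False := by
  have htR : (0:ℝ) < t := by exact_mod_cast ht
  have key : ∀ n, g n = 0 ∧ g (n+1) = 0 := by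
    intro n
    induction n with
    | zero => exact ⟨h0, h1⟩
    | succ n ih =>
      refine ⟨ih.2, ?_⟩
      rw [hrec n, ih.1, ih.2]
      simp
  obtain ⟨n₀, hn₀⟩ := exists_nat_ge (-(s:ℝ))
  have hpos : 0 < g n₀ := by
    rw [hgdef n₀]
    exact G_pos _ _ htR.le (by linarith)
  rw [(key n₀).1] at hpos
  exact lt_irrefl 0 hpos

lemma independent (s t : ℚ) (ht : 0 < t) (p q : ℚ) (hpq : p ≠ 0 ∨ q ≠ 0)
    (hrel : (p:ℝ) * G (t:ℝ) ((s:ℝ)) + (q:ℝ) * G (t:ℝ) ((s:ℝ)+1) = 0) : False := by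
  have htR : (0:ℝ) < t := by exact_mod_cast ht
  set g : ℕ → ℝ := fun n => G (t:ℝ) ((s:ℝ) + n) with hgdef
  have hgdef' : ∀ n : ℕ, g n = G (t:ℝ) ((s:ℝ) + n) := fun n => rfl
  have hrec : ∀ n : ℕ, g (n+2) = (g n - ((s:ℝ) + n + 1) * g (n+1)) / (t:ℝ) := by
    intro n
    have hG := G_rec (t:ℝ) ((s:ℝ) + n)
    have e1 : ((s:ℝ) + (n:ℝ) + 1) = (s:ℝ) + ((n+1:ℕ):ℝ) := by push_cast; ring
    have e2 : ((s:ℝ) + (n:ℝ) + 2) = (s:ℝ) + ((n+2:ℕ):ℝ) := by push_cast; ring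
    rw [e1, e2] at hG
    -- hG : G t (s+n) = (s+(n+1)) * G t (s+(n+1)) + t * G t (s+(n+2))
    rw [eq_div_iff htR.ne']
    have g0 : g n = G (t:ℝ) ((s:ℝ) + n) := rfl
    have g1 : g (n+1) = G (t:ℝ) ((s:ℝ) + ((n+1:ℕ):ℝ)) := rfl
    have g2 : g (n+2) = G (t:ℝ) ((s:ℝ) + ((n+2:ℕ):ℝ)) := rfl
    rw [g0, g1, g2, ← e1]
    push_cast at hG ⊢
    ring_nf at hG ⊢
    linarith
  -- the main engine
  have main : ∀ (w0 w1 : ℚ) (h : ℝ), h ≠ 0 → g 0 = (w0:ℝ) * h → g 1 = (w1:ℝ) * h → False := by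
    intro w0 w1 h hne h0 h1
    have tracks := wseq_tracks s t ht w0 w1 g h hrec h0 h1
    set D : ℕ := w0.den * w1.den with hD
    set M : ℤ := t.num * s.den with hM
    have htnum : 0 < t.num := Rat.num_pos.mpr ht
    have hMpos : 0 < M := by positivity
    have hMr : (0:ℝ) < (M:ℝ) := by exact_mod_cast hMpos
    have hDpos : 0 < D := by positivity
    have hDr : (0:ℝ) < (D:ℝ) := by exact_mod_cast hDpos
    obtain ⟨n₀, hn₀⟩ := exists_nat_ge (-(s:ℝ))
    set E : ℝ := ∑' k : ℕ, (t:ℝ) ^ k / k.factorial with hE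
    have hE1 : (1:ℝ) ≤ E := by
      have h00 : (t:ℝ) ^ (0:ℕ) / ((0:ℕ).factorial : ℝ) = 1 := by norm_num
      rw [hE, ← h00]
      exact Summable.le_tsum (Real.summable_pow_div_factorial _) 0
        (fun j _ => by positivity)
    set C : ℝ := Real.Gamma ((s:ℝ) + n₀ + 1) with hC
    have hCpos : 0 < C := Real.Gamma_pos_of_pos (by linarith)
    have bound : ∀ m : ℕ, |h| ≤ (E * D * (M:ℝ)^n₀ / C) * ((M:ℝ)^m / m.factorial) := by
      intro m
      set n : ℕ := n₀ + m with hn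
      have hν : (0:ℝ) ≤ (s:ℝ) + (n:ℝ) := by
        push_cast [hn]
        have : (0:ℝ) ≤ (m:ℝ) := Nat.cast_nonneg m
        linarith
      have hgpos : 0 < g n := G_pos _ _ htR.le hν
      have hwne : (wseq s t w0 w1 n : ℚ) ≠ 0 := by
        intro hw0
        rw [tracks n, hw0] at hgpos
        simp at hgpos
      obtain ⟨z, hz⟩ := wseq_den s t w0 w1 ht n
      rw [← hD, ← hM] at hz
      have hzne : z ≠ 0 := by
        intro hz0
        rw [hz0] at hz
        have hMq : ((M:ℚ)) ≠ 0 := by exact_mod_cast hMpos.ne'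
        have hDq : ((D:ℚ)) ≠ 0 := by exact_mod_cast hDpos.ne'
        push_cast at hz
        have := mul_ne_zero (mul_ne_zero hDq (pow_ne_zero n hMq)) hwne
        exact this hz
      have hz1 : (1:ℚ) ≤ |(z:ℚ)| := by
        have : (1:ℤ) ≤ |z| := Int.one_le_abs (by exact_mod_cast hzne)
        exact_mod_cast this
      have hwabs : 1 / ((D:ℝ) * (M:ℝ)^n) ≤ |((wseq s t w0 w1 n : ℚ) : ℝ)| := by
        have hXq : (0:ℚ) < (D:ℚ) * (M:ℚ)^n := by
          have h1 : (0:ℚ) < (D:ℚ) := by exact_mod_cast hDpos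
          have h2 : (0:ℚ) < (M:ℚ) := by exact_mod_cast hMpos
          positivity
        have habsq : 1 / ((D:ℚ) * (M:ℚ)^n) ≤ |wseq s t w0 w1 n| := by
          rw [div_le_iff₀ hXq]
          calc (1:ℚ) ≤ |(z:ℚ)| := hz1
            _ = |(D:ℚ) * (M:ℚ)^n * wseq s t w0 w1 n| := by rw [hz]
            _ = ((D:ℚ) * (M:ℚ)^n) * |wseq s t w0 w1 n| := by
                rw [abs_mul, abs_of_pos hXq]
            _ = |wseq s t w0 w1 n| * ((D:ℚ) * (M:ℚ)^n) := by ring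
        exact_mod_cast habsq
      -- |h| ≤ g n * (D * M^n)
      have hXr : (0:ℝ) < (D:ℝ) * (M:ℝ)^n := by positivity
      have step1 : |h| / ((D:ℝ) * (M:ℝ)^n) ≤ g n := by
        rw [div_eq_mul_one_div]
        calc |h| * (1 / ((D:ℝ) * (M:ℝ)^n)) ≤ |h| * |((wseq s t w0 w1 n : ℚ) : ℝ)| :=
              mul_le_mul_of_nonneg_left hwabs (abs_nonneg h)
          _ = |g n| := by rw [← abs_mul, tracks n, mul_comm]
          _ = g n := abs_of_pos hgpos
      have step1' : |h| ≤ g n * ((D:ℝ) * (M:ℝ)^n) := (div_le_iff₀ hXr).mp step1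
      -- g n ≤ E / Γ(s+n+1), and Γ(s+n+1) ≥ m! * C
      have hgam : (m.factorial : ℝ) * C ≤ Real.Gamma ((s:ℝ) + n + 1) := by
        have := gamma_lb ((s:ℝ) + n₀) (by linarith) m
        have e3 : ((s:ℝ) + n₀ + m + 1) = (s:ℝ) + (n:ℝ) + 1 := by push_cast [hn]; ring
        rw [e3] at this
        exact this
      have hgampos : 0 < Real.Gamma ((s:ℝ) + n + 1) := Real.Gamma_pos_of_pos (by linarith)
      have step2 : g n ≤ E / ((m.factorial : ℝ) * C) := by
        calc g n ≤ E / Real.Gamma ((s:ℝ) + (n:ℝ) + 1) := G_ub _ _ htR.le hν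
          _ ≤ E / ((m.factorial : ℝ) * C) := by
              apply div_le_div_of_nonneg_left (by linarith) (by positivity) hgam
      calc |h| ≤ g n * ((D:ℝ) * (M:ℝ)^n) := step1'
        _ ≤ (E / ((m.factorial : ℝ) * C)) * ((D:ℝ) * (M:ℝ)^n) :=
            mul_le_mul_of_nonneg_right step2 hXr.le
        _ = (E * D * (M:ℝ)^n₀ / C) * ((M:ℝ)^m / m.factorial) := by
            rw [hn, pow_add]
            have hf : ((m.factorial:ℝ)) ≠ 0 := by positivity
            field_simp
    have htend : Tendsto (fun m : ℕ => (E * D * (M:ℝ)^n₀ / C) * ((M:ℝ)^m / m.factorial))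
        atTop (nhds 0) := by
      have := (FloorSemiring.tendsto_pow_div_factorial_atTop (K := ℝ) ((M:ℝ))).const_mul
        (E * D * (M:ℝ)^n₀ / C)
      simpa using this
    have hle : |h| ≤ 0 := ge_of_tendsto' htend bound
    exact hne (abs_eq_zero.mp (le_antisymm hle (abs_nonneg h)))
  -- case analysis
  by_cases hg0 : g 0 = 0
  · by_cases hg1 : g 1 = 0
    · exact zero_case s t ht g hgdef' hrec hg0 hg1
    · exact main 0 1 (g 1) hg1 (by rw [hg0]; simp) (by simp)
  · rcases eq_or_ne q 0 with rfl | hq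
    · have hp : p ≠ 0 := by tauto
      apply hg0
      have hg00 : g 0 = G (t:ℝ) (s:ℝ) := by rw [hgdef' 0]; norm_num
      have hzz : (p:ℝ) * g 0 = 0 := by rw [hg00]; push_cast at hrel; linarith
      have hpR : (p:ℝ) ≠ 0 := by exact_mod_cast hp
      exact (mul_eq_zero.mp hzz).resolve_left hpR
    · apply main 1 (-p/q) (g 0) hg0 (by simp)
      have hqR : (q:ℝ) ≠ 0 := by exact_mod_cast hq
      have : g 1 = -(p:ℝ)/(q:ℝ) * g 0 := by
        have h0 : g 0 = G (t:ℝ) (s:ℝ) := by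
          rw [hgdef' 0]; norm_num
        have h1 : g 1 = G (t:ℝ) ((s:ℝ)+1) := by
          rw [hgdef' 1]; norm_num
        rw [h0, h1]
        field_simp
        linarith
      rw [this]
      push_cast
      ring


end BesselAux

/-- The modified Bessel function of the first kind of order `ν`, for `r > 0`:
`I_ν(r) = ∑_{k=0}^∞ (1 / (k! Γ(ν+k+1))) (r/2)^(ν+2k)`. -/
noncomputable def besselI (ν r : ℝ) : ℝ :=
  ∑' k : ℕ, (1 / (k.factorial * Real.Gamma (ν + k + 1))) *
    (r / 2) ^ (ν + 2 * (k : ℝ))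

namespace BesselAux



lemma besselI_eq (ν r : ℝ) (hr : 0 < r) :
    _root_.besselI ν r = (r/2) ^ ν * G ((r/2)^2) ν := by
  have h2 : (0:ℝ) < r/2 := by linarith
  unfold _root_.besselI G
  rw [← tsum_mul_left]
  apply tsum_congr
  intro k
  have e1 : (r/2) ^ (ν + 2 * (k:ℝ)) = (r/2) ^ ν * (r/2) ^ (2 * (k:ℝ)) :=
    Real.rpow_add h2 _ _
  have e2 : (r/2) ^ (2 * (k:ℝ)) = ((r/2)^2) ^ k := by
    rw [show (2 * (k:ℝ)) = ((2*k : ℕ) : ℝ) by push_cast; ring,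
      Real.rpow_natCast, pow_mul]
  rw [e1, e2]
  ring


end BesselAux

theorem besselI_ne_zero_and_ratio_irrational (s : ℚ) (r : ℝ) (hr : 0 < r)
    (hq : ∃ q : ℚ, r ^ 2 = (q : ℝ)) :
    besselI (s : ℝ) r ≠ 0 ∧ Irrational (r * besselI ((s : ℝ) + 1) r / besselI (s : ℝ) r) := by
  obtain ⟨q, hq⟩ := hq
  have hqpos : 0 < q := by
    have : (0:ℝ) < (q:ℝ) := by rw [← hq]; positivity
    exact_mod_cast this
  set t : ℚ := q / 4 with htdef
  have htpos : 0 < t := by positivity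
  have htcast : ((t:ℚ):ℝ) = (r/2)^2 := by
    push_cast [htdef]
    rw [div_pow, ← hq]
    ring
  have h2 : (0:ℝ) < r/2 := by linarith
  have hPpos : 0 < (r/2) ^ (s:ℝ) := Real.rpow_pos_of_pos h2 _
  have hB0 : besselI (s:ℝ) r = (r/2) ^ (s:ℝ) * BesselAux.G (t:ℝ) (s:ℝ) := by
    rw [BesselAux.besselI_eq _ _ hr, htcast]
  have hB1 : besselI ((s:ℝ)+1) r = (r/2) ^ ((s:ℝ)+1) * BesselAux.G (t:ℝ) ((s:ℝ)+1) := by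
    rw [BesselAux.besselI_eq _ _ hr, htcast]
  have hg0 : BesselAux.G (t:ℝ) (s:ℝ) ≠ 0 := by
    intro h0
    exact BesselAux.independent s t htpos 1 0 (Or.inl one_ne_zero) (by push_cast; rw [h0]; ring)
  have hne : besselI (s:ℝ) r ≠ 0 := by
    rw [hB0]
    exact mul_ne_zero hPpos.ne' hg0
  refine ⟨hne, ?_⟩
  rintro ⟨c, hc⟩
  -- hc : (c:ℝ) = r * besselI (s+1) r / besselI s r
  have key : (c:ℝ) * besselI (s:ℝ) r = r * besselI ((s:ℝ)+1) r := by
    rw [hc]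
    field_simp
  rw [hB0, hB1, Real.rpow_add h2, Real.rpow_one] at key
  -- c * P * g0 = r * (P * (r/2) * g1)
  have key2 : (c:ℝ) * BesselAux.G (t:ℝ) (s:ℝ) = (r * (r/2)) * BesselAux.G (t:ℝ) ((s:ℝ)+1) := by
    have hP := hPpos.ne'
    field_simp at key
    -- massage
    nlinarith [key, hPpos, sq_nonneg ((r/2) ^ (s:ℝ))]
  have hrr : r * (r/2) = ((q/2 : ℚ) : ℝ) := by
    push_cast
    rw [show r * (r/2) = r^2/2 by ring, hq]
  rw [hrr] at key2
  refine BesselAux.independent s t htpos (-c) (q/2) (Or.inr (by positivity)) ?_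
  push_cast at key2 ⊢
  linarith
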